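/- arXiv:2403.07900 — 2 statements merged into one kernel-verified Lean document; each statement's English description precedes it below -/
import Mathlib

section
/- For any convex body C in H^d and any supporting hyperplane H of C, the width of C determined by H equals the distance between H and the nearest equidistant hypersurface E to H such that C is contained in the convex hull of H ∪ E. -/
/- We formalize hyperbolic space `H^d` via the Beltrami–Klein model: the open
unit ball of `ℝ^d`, where hyperbolic geodesic segments are exactly Euclidean
segments (so hyperbolic convexity = Euclidean convexity), hyperplanes are
chords of affine hyperplanes, and the hyperbolic distance is given by the
Cayley–Klein formula `cosh d(x,y) = (1 - ⟪x,y⟫)/√((1-‖x‖²)(1-‖y‖²))`. -/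

noncomputable section
open Metric Set RealInnerProductSpace

namespace Hyp

abbrev E (d : ℕ) := EuclideanSpace ℝ (Fin d)

/-- The Klein model of `H^d`: the open unit ball. -/
def ball01 (d : ℕ) : Set (E d) := Metric.ball 0 1

/-- Inverse hyperbolic cosine. -/
def acosh (z : ℝ) : ℝ := Real.log (z + Real.sqrt (z ^ 2 - 1))

/-- Hyperbolic distance in the Beltrami–Klein model. -/
def hDist {d : ℕ} (x y : E d) : ℝ :=
  acosh ((1 - (inner ℝ x y : ℝ)) / (Real.sqrt (1 - ‖x‖ ^ 2) * Real.sqrt (1 - ‖y‖ ^ 2)))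

/-- Hyperbolic diameter of a set. -/
def hDiam {d : ℕ} (C : Set (E d)) : ℝ :=
  sSup {r | ∃ a ∈ C, ∃ b ∈ C, hDist a b = r}

/-- Hyperbolic (infimal) distance between two sets. -/
def hSetDist {d : ℕ} (A B : Set (E d)) : ℝ :=
  sInf {r | ∃ a ∈ A, ∃ b ∈ B, hDist a b = r}

/-- Hyperbolic distance from a point to a set. -/
def hPointDist {d : ℕ} (x : E d) (A : Set (E d)) : ℝ :=
  sInf {r | ∃ a ∈ A, hDist x a = r}

/-- Closed hyperbolic ball of radius `r` about `x`. -/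
def hBall {d : ℕ} (x : E d) (r : ℝ) : Set (E d) :=
  {y ∈ ball01 d | hDist x y ≤ r}

/-- A convex body in `H^d`: compact, convex (hyperbolically, i.e. in the Klein
model also Euclidean-convex), with nonempty interior, inside the model. -/
def IsBody {d : ℕ} (C : Set (E d)) : Prop :=
  IsCompact C ∧ Convex ℝ C ∧ (interior C).Nonempty ∧ C ⊆ ball01 d

/-- A hyperplane of `H^d` in the Klein model: a chord `{x ∈ B | ⟪u,x⟫ = c}` of
the unit ball, with `‖u‖ = 1` and `|c| < 1` (so the chord is nonempty). -/
structure HPlane (d : ℕ) where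
  u : E d
  c : ℝ
  norm_u : ‖u‖ = 1
  abs_c : |c| < 1

/-- The underlying set of points of a hyperplane. -/
def HPlane.carrier {d : ℕ} (H : HPlane d) : Set (E d) :=
  {x ∈ ball01 d | (inner ℝ H.u x : ℝ) = H.c}

/-- `H` supports `C`: they meet and `C` lies in the closed half-space
`⟪u,·⟫ ≤ c` (an orientation of the normal is chosen accordingly). -/
def Supports {d : ℕ} (H : HPlane d) (C : Set (E d)) : Prop :=
  (H.carrier ∩ C).Nonempty ∧ ∀ x ∈ C, (inner ℝ H.u x : ℝ) ≤ H.c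

/-- Two hyperplanes are ultraparallel iff their closures (in `ℝ^d`, hence
including ideal boundary points) are disjoint. -/
def Ultraparallel {d : ℕ} (H K : HPlane d) : Prop :=
  closure H.carrier ∩ closure K.carrier = ∅

/-- The width of `C` determined by a supporting hyperplane `H`: the distance
from `H` to a farthest ultraparallel supporting hyperplane of `C`. -/
def hwidth {d : ℕ} (C : Set (E d)) (H : HPlane d) : ℝ :=
  sSup {r | ∃ K : HPlane d, Ultraparallel H K ∧ Supports K C ∧
    r = hSetDist H.carrier K.carrier}

/-- Thickness: the minimum width over all supporting hyperplanes. -/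
def thickness {d : ℕ} (C : Set (E d)) : ℝ :=
  sInf {r | ∃ H : HPlane d, Supports H C ∧ r = hwidth C H}

/-- A reduced body. -/
def IsReduced {d : ℕ} (R : Set (E d)) : Prop :=
  IsBody R ∧ ∀ Z : Set (E d), IsBody Z → Z ⊆ R → Z ≠ R → thickness Z < thickness R

/-- The equidistant hypersurface to `H` at distance `t`, on the side
`⟪u,·⟫ < c` (the side on which supported bodies lie). -/
def equiSurf {d : ℕ} (H : HPlane d) (t : ℝ) : Set (E d) :=
  {x ∈ ball01 d | (inner ℝ H.u x : ℝ) < H.c ∧ hPointDist x H.carrier = t}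

/-- The distance from `H` to the nearest equidistant hypersurface `E` to `H`
with `C ⊆ conv(H ∪ E)` (the thickness of the equidistant strip `conv(H ∪ E)`). -/
def equiLevel {d : ℕ} (C : Set (E d)) (H : HPlane d) : ℝ :=
  sInf {t | 0 < t ∧ C ⊆ convexHull ℝ (H.carrier ∪ equiSurf H t)}

/-- `E_H(C)`: the nearest equidistant hypersurface to `H` such that `C` is
contained in the equidistant strip `conv(H ∪ E_H(C))`. -/
def EH {d : ℕ} (C : Set (E d)) (H : HPlane d) : Set (E d) :=
  equiSurf H (equiLevel C H)

/-- A body of constant width `δ`. -/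
def ConstWidth {d : ℕ} (C : Set (E d)) (δ : ℝ) : Prop :=
  ∀ H : HPlane d, Supports H C → hwidth C H = δ

/-- A complete set of diameter `δ`: adding any point of `H^d` outside `C`
strictly increases the diameter. -/
def IsComplete {d : ℕ} (C : Set (E d)) (δ : ℝ) : Prop :=
  hDiam C = δ ∧ ∀ x ∈ ball01 d, x ∉ C → hDiam (insert x C) > δ

/-- The circular arc `P_c(a,b)`: points `g` at hyperbolic distance `δ` from `c`
whose (hyperbolic = Euclidean, in the Klein model) segment to `c` meets the
segment `ab`. -/
def arcP {d : ℕ} (c a b : E d) (δ : ℝ) : Set (E d) :=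
  {g ∈ ball01 d | hDist c g = δ ∧ (segment ℝ c g ∩ segment ℝ a b).Nonempty}


section WidthProof

variable {d : ℕ}

def sq1 (x : E d) : ℝ := Real.sqrt (1 - ‖x‖ ^ 2)

lemma sq1_nonneg (x : E d) : 0 ≤ sq1 x := Real.sqrt_nonneg _

lemma sq1_le_one (x : E d) : sq1 x ≤ 1 := by
  rw [show (1:ℝ) = Real.sqrt 1 by rw [Real.sqrt_one]]
  exact Real.sqrt_le_sqrt (by nlinarith [sq_nonneg ‖x‖])

lemma sq1_sq {x : E d} (hx : ‖x‖ ≤ 1) : sq1 x ^ 2 = 1 - ‖x‖ ^ 2 :=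
  Real.sq_sqrt (by nlinarith [norm_nonneg x])

lemma sq1_pos {x : E d} (hx : ‖x‖ < 1) : 0 < sq1 x :=
  Real.sqrt_pos.2 (by nlinarith [norm_nonneg x])

lemma key_CS {x y : E d} (hx : ‖x‖ ≤ 1) (hy : ‖y‖ ≤ 1) :
    sq1 x * sq1 y ≤ 1 - ⟪x, y⟫ := by
  have h1 : (⟪x, y⟫ : ℝ) ≤ ‖x‖ * ‖y‖ := real_inner_le_norm x y
  have h0 : (0:ℝ) ≤ 1 - ‖x‖ ^ 2 := by nlinarith [norm_nonneg x]
  have h2 : sq1 x * sq1 y = Real.sqrt ((1 - ‖x‖ ^ 2) * (1 - ‖y‖ ^ 2)) :=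
    (Real.sqrt_mul h0 _).symm
  rw [h2]
  calc Real.sqrt ((1 - ‖x‖ ^ 2) * (1 - ‖y‖ ^ 2))
      ≤ Real.sqrt ((1 - ‖x‖ * ‖y‖) ^ 2) := by
        apply Real.sqrt_le_sqrt; nlinarith [norm_nonneg x, norm_nonneg y, sq_nonneg (‖x‖ - ‖y‖)]
    _ = 1 - ‖x‖ * ‖y‖ := Real.sqrt_sq (by nlinarith [norm_nonneg x, norm_nonneg y])
    _ ≤ 1 - ⟪x, y⟫ := by linarith

lemma cosh_acosh {z : ℝ} (hz : 1 ≤ z) : Real.cosh (acosh z) = z := by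
  have hs : Real.sqrt (z ^ 2 - 1) ^ 2 = z ^ 2 - 1 := Real.sq_sqrt (by nlinarith)
  have hy : 0 < z + Real.sqrt (z ^ 2 - 1) := by positivity
  have hmul : (z + Real.sqrt (z ^ 2 - 1)) * (z - Real.sqrt (z ^ 2 - 1)) = 1 := by
    nlinarith [hs]
  have hinv : (z + Real.sqrt (z ^ 2 - 1))⁻¹ = z - Real.sqrt (z ^ 2 - 1) :=
    inv_eq_of_mul_eq_one_right hmul
  have hy2 : 0 < z - Real.sqrt (z ^ 2 - 1) := by
    rw [← hinv]; exact inv_pos.2 hy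
  rw [acosh, Real.cosh_eq, Real.exp_log hy, ← Real.log_inv, Real.exp_log (by rw [hinv]; exact hy2), hinv]
  ring

lemma sinh_acosh {z : ℝ} (hz : 1 ≤ z) : Real.sinh (acosh z) = Real.sqrt (z ^ 2 - 1) := by
  have hs : Real.sqrt (z ^ 2 - 1) ^ 2 = z ^ 2 - 1 := Real.sq_sqrt (by nlinarith)
  have hy : 0 < z + Real.sqrt (z ^ 2 - 1) := by positivity
  have hmul : (z + Real.sqrt (z ^ 2 - 1)) * (z - Real.sqrt (z ^ 2 - 1)) = 1 := by
    nlinarith [hs]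
  have hinv : (z + Real.sqrt (z ^ 2 - 1))⁻¹ = z - Real.sqrt (z ^ 2 - 1) :=
    inv_eq_of_mul_eq_one_right hmul
  have hy2 : 0 < z - Real.sqrt (z ^ 2 - 1) := by
    rw [← hinv]; exact inv_pos.2 hy
  rw [acosh, Real.sinh_eq, Real.exp_log hy, ← Real.log_inv, Real.exp_log (by rw [hinv]; exact hy2), hinv]
  ring

lemma acosh_cosh {t : ℝ} (ht : 0 ≤ t) : acosh (Real.cosh t) = t := by
  have h1 : Real.cosh t ^ 2 - 1 = Real.sinh t ^ 2 := by rw [Real.cosh_sq]; ring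
  have h2 : (0:ℝ) ≤ Real.sinh t := by
    rw [← Real.sinh_zero]; exact Real.sinh_le_sinh.2 ht
  rw [acosh, h1, Real.sqrt_sq h2, Real.cosh_add_sinh, Real.log_exp]

lemma acosh_nonneg {z : ℝ} (hz : 1 ≤ z) : 0 ≤ acosh z :=
  Real.log_nonneg (by nlinarith [Real.sqrt_nonneg (z ^ 2 - 1)])

lemma acosh_le_acosh {a b : ℝ} (ha : 1 ≤ a) (hab : a ≤ b) : acosh a ≤ acosh b := by
  apply Real.log_le_log (by nlinarith [Real.sqrt_nonneg (a ^ 2 - 1)])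
  have := Real.sqrt_le_sqrt (show a ^ 2 - 1 ≤ b ^ 2 - 1 by nlinarith)
  linarith

lemma hDist_eq (x y : E d) : hDist x y = acosh ((1 - ⟪x, y⟫) / (sq1 x * sq1 y)) := rfl

lemma one_le_hQ {x y : E d} (hx : ‖x‖ < 1) (hy : ‖y‖ < 1) :
    1 ≤ (1 - ⟪x, y⟫) / (sq1 x * sq1 y) := by
  rw [le_div_iff₀ (mul_pos (sq1_pos hx) (sq1_pos hy))]
  simpa using key_CS hx.le hy.le

lemma hDist_symm (x y : E d) : hDist x y = hDist y x := by
  unfold hDist; rw [real_inner_comm, mul_comm]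

lemma hDist_nonneg {x y : E d} (hx : ‖x‖ < 1) (hy : ‖y‖ < 1) : 0 ≤ hDist x y :=
  acosh_nonneg (one_le_hQ hx hy)

def Fv (H : HPlane d) (x : E d) : ℝ := H.c - ⟪H.u, x⟫
def Mval (H : HPlane d) (x : E d) : ℝ :=
  Real.sqrt (1 + (Fv H x / sq1 x) ^ 2 / (1 - H.c ^ 2))

lemma kpos (H : HPlane d) : 0 < 1 - H.c ^ 2 := by
  nlinarith [abs_nonneg H.c, sq_abs H.c, abs_lt.1 H.abs_c]

lemma one_le_Mval (H : HPlane d) (x : E d) : 1 ≤ Mval H x := by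
  have h1 : 0 ≤ (Fv H x / sq1 x) ^ 2 / (1 - H.c ^ 2) :=
    div_nonneg (sq_nonneg _) (kpos H).le
  have h2 := Real.sqrt_le_sqrt (show (1:ℝ) ≤ 1 + (Fv H x / sq1 x) ^ 2 / (1 - H.c ^ 2) by linarith)
  rwa [Real.sqrt_one] at h2

lemma Mval_nonneg (H : HPlane d) (x : E d) : 0 ≤ Mval H x :=
  le_trans zero_le_one (one_le_Mval H x)

lemma mem_carrier {H : HPlane d} {x : E d} :
    x ∈ H.carrier ↔ ‖x‖ < 1 ∧ (⟪H.u, x⟫ : ℝ) = H.c := by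
  unfold HPlane.carrier ball01
  simp [mem_ball_zero_iff]

lemma Mval_sq (H : HPlane d) (x : E d) (hx : ‖x‖ < 1) :
    Mval H x ^ 2 = 1 + (Fv H x) ^ 2 / ((1 - ‖x‖ ^ 2) * (1 - H.c ^ 2)) := by
  have h1 : 0 ≤ (Fv H x / sq1 x) ^ 2 / (1 - H.c ^ 2) :=
    div_nonneg (sq_nonneg _) (kpos H).le
  rw [Mval, Real.sq_sqrt (by linarith), div_pow, sq1_sq hx.le, div_div]


lemma aux_one_sub_sq {t : ℝ} (h0 : 0 ≤ t) (h1 : t < 1) : 0 < 1 - t ^ 2 := by nlinarith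

lemma aux_lt_one_of_sq {t : ℝ} (h0 : 0 ≤ t) (h : t ^ 2 < 1) : t < 1 := by nlinarith

lemma aux_P {c m : ℝ} (hc : |c| < 1) (hm : |m| < 1) : 0 < 1 - c * m := by
  nlinarith [abs_lt.1 hc, abs_lt.1 hm]

lemma aux_ABP {A B P k : ℝ} (hA0 : 0 ≤ A) (hB0 : 0 ≤ B) (hk : 0 < k) (hP : 0 < P)
    (hBk : B ^ 2 < k) (hN : 0 < P ^ 2 - k * A ^ 2) : A * B ≤ P := by
  nlinarith [sq_nonneg (A * B - P), sq_nonneg A, mul_nonneg hA0 hB0]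

lemma aux_main {A B P k τ : ℝ} (hk : 0 < k) (hτAB : τ ≤ A * B) (hABP : A * B ≤ P) :
    (P ^ 2 - k * A ^ 2) * (k - B ^ 2) ≤ k * (P - τ) ^ 2 := by
  have h5 : (P - A * B) ^ 2 ≤ (P - τ) ^ 2 := by nlinarith
  nlinarith [sq_nonneg (P * B - k * A)]

set_option maxHeartbeats 1000000 in
/-- The fundamental "foot of perpendicular" computation. -/
lemma isLeast_hPointDist (H : HPlane d) (x : E d) (hx : ‖x‖ < 1) (hF : 0 ≤ Fv H x) :
    IsLeast {r | ∃ a ∈ H.carrier, hDist x a = r} (acosh (Mval H x)) := by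
  have hu : ‖H.u‖ = 1 := H.norm_u
  have hc : |H.c| < 1 := H.abs_c
  set u : E d := H.u with hudef
  set c : ℝ := H.c with hcdef
  set m : ℝ := (⟪u, x⟫ : ℝ) with hm
  set k : ℝ := 1 - c ^ 2 with hkdef
  set P : ℝ := 1 - c * m with hPdef
  have huu : (⟪u, u⟫ : ℝ) = 1 := by
    rw [real_inner_self_eq_norm_sq, hu]; norm_num
  have hk : 0 < k := kpos H
  have hmx : |m| ≤ ‖x‖ := by
    have := abs_real_inner_le_norm u x; rwa [hu, one_mul] at this
  have hm1 : |m| < 1 := lt_of_le_of_lt hmx hx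
  have hP : 0 < P := aux_P hc hm1
  have hFvx : Fv H x = c - m := rfl
  set xp : E d := x - m • u with hxp
  have hxu : (⟪x, u⟫ : ℝ) = m := by rw [real_inner_comm]
  have hux : (⟪u, xp⟫ : ℝ) = 0 := by
    rw [hxp, inner_sub_right, real_inner_smul_right, huu, mul_one, sub_self]
  have hxpu : (⟪xp, u⟫ : ℝ) = 0 := by rw [real_inner_comm]; exact hux
  set A : ℝ := ‖xp‖ with hAdef
  have hA : A ^ 2 = ‖x‖ ^ 2 - m ^ 2 := by
    rw [hAdef, hxp, norm_sub_sq_real, real_inner_smul_right, hxu, norm_smul, hu, mul_one,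
      Real.norm_eq_abs, sq_abs]
    ring
  have hxxp : (⟪x, xp⟫ : ℝ) = A ^ 2 := by
    rw [hxp, inner_sub_right, real_inner_smul_right, hxu, real_inner_self_eq_norm_sq, hA]
    ring
  have hX : (0:ℝ) < 1 - ‖x‖ ^ 2 := aux_one_sub_sq (norm_nonneg x) hx
  set N : ℝ := P ^ 2 - k * A ^ 2 with hNdef
  have hNeq : N = k * (1 - ‖x‖ ^ 2) + (c - m) ^ 2 := by
    rw [hNdef, hA, hkdef, hPdef]; ring
  have hNpos : 0 < N := by
    rw [hNeq]; have := mul_pos hk hX; linarith [sq_nonneg (c - m)]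
  -- the foot of the perpendicular from x to the hyperplane
  set af : E d := c • u + (k / P) • xp with haf
  have h1 : (⟪u, af⟫ : ℝ) = c := by
    rw [haf, inner_add_right, real_inner_smul_right, real_inner_smul_right, huu, hux]; ring
  have h2 : (⟪x, af⟫ : ℝ) = c * m + (k / P) * A ^ 2 := by
    rw [haf, inner_add_right, real_inner_smul_right, real_inner_smul_right, hxu, hxxp]
  have h3 : ‖af‖ ^ 2 = c ^ 2 + (k / P) ^ 2 * A ^ 2 := by
    rw [haf, norm_add_sq_real, real_inner_smul_left, real_inner_smul_right, hux,
      norm_smul, norm_smul, hu, mul_one]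
    simp only [Real.norm_eq_abs, mul_pow, sq_abs]
    ring
  have he1 : (1:ℝ) - ⟪x, af⟫ = N / P := by
    rw [h2, hNdef]; field_simp; ring
  have he2 : 1 - ‖af‖ ^ 2 = k * N / P ^ 2 := by
    rw [h3, hNdef, hkdef]; field_simp; ring
  have hafn : ‖af‖ < 1 := by
    have h4 : ‖af‖ ^ 2 < 1 := by
      have := div_pos (mul_pos hk hNpos) (pow_pos hP 2)
      linarith [he2]
    exact aux_lt_one_of_sq (norm_nonneg af) h4
  have hafc : af ∈ H.carrier := mem_carrier.2 ⟨hafn, h1⟩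
  have hMsq : Mval H x ^ 2 = N / (k * (1 - ‖x‖ ^ 2)) := by
    rw [Mval_sq H x hx, hFvx]
    rw [eq_div_iff (by positivity)]
    rw [hNeq]
    have hk' : (1 - H.c ^ 2) ≠ 0 := (kpos H).ne'
    field_simp
    ring
  have hsq1x : sq1 x ^ 2 = 1 - ‖x‖ ^ 2 := sq1_sq hx.le
  have hsq1af : sq1 af ^ 2 = 1 - ‖af‖ ^ 2 := sq1_sq hafn.le
  have hQval : (1 - ⟪x, af⟫) / (sq1 x * sq1 af) = Mval H x := by
    have hQnn : 0 ≤ (1 - ⟪x, af⟫) / (sq1 x * sq1 af) :=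
      le_trans zero_le_one (one_le_hQ hx hafn)
    have hsq : ((1 - ⟪x, af⟫) / (sq1 x * sq1 af)) ^ 2 = Mval H x ^ 2 := by
      rw [div_pow, mul_pow, hsq1x, hsq1af, he1, he2, hMsq]
      rw [div_pow]
      rw [div_eq_div_iff (by positivity) (by positivity)]
      field_simp
    calc (1 - ⟪x, af⟫) / (sq1 x * sq1 af)
        = Real.sqrt (((1 - ⟪x, af⟫) / (sq1 x * sq1 af)) ^ 2) := (Real.sqrt_sq hQnn).symm
      _ = Real.sqrt (Mval H x ^ 2) := by rw [hsq]
      _ = Mval H x := Real.sqrt_sq (Mval_nonneg H x)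
  constructor
  · exact ⟨af, hafc, by rw [hDist_eq, hQval]⟩
  · rintro r ⟨a, hac, rfl⟩
    obtain ⟨han, hax⟩ := mem_carrier.1 hac
    rw [hDist_eq]
    apply acosh_le_acosh (one_le_Mval _ _)
    set ap : E d := a - c • u with hap
    have hau : (⟪a, u⟫ : ℝ) = c := by rw [real_inner_comm]; exact hax
    have huap : (⟪u, ap⟫ : ℝ) = 0 := by
      rw [hap, inner_sub_right, real_inner_smul_right, huu, hax]; ring
    set B : ℝ := ‖ap‖ with hBdef
    have hB : B ^ 2 = ‖a‖ ^ 2 - c ^ 2 := by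
      rw [hBdef, hap, norm_sub_sq_real, real_inner_smul_right, hau, norm_smul, hu, mul_one,
        Real.norm_eq_abs, sq_abs]
      ring
    set τ : ℝ := (⟪xp, ap⟫ : ℝ) with hτ
    have hxa : (⟪x, a⟫ : ℝ) = c * m + τ := by
      have hx' : x = xp + m • u := by rw [hxp]; abel
      have ha' : a = ap + c • u := by rw [hap]; abel
      calc (⟪x, a⟫ : ℝ) = ⟪xp + m • u, ap + c • u⟫ := by rw [← hx', ← ha']
        _ = τ + c * ⟪xp, u⟫ + (m * ⟪u, ap⟫ + m * (c * ⟪u, u⟫)) := by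
            rw [inner_add_left, inner_add_right, inner_add_right, real_inner_smul_left,
              real_inner_smul_left, real_inner_smul_right, real_inner_smul_right]
            try ring
        _ = c * m + τ := by rw [hxpu, huap, huu]; try ring
    have hτAB : τ ≤ A * B := by
      have := real_inner_le_norm xp ap; rwa [← hAdef, ← hBdef, ← hτ] at this
    have hYa : (0:ℝ) < 1 - ‖a‖ ^ 2 := aux_one_sub_sq (norm_nonneg a) han
    have hBk : B ^ 2 < k := by rw [hB, hkdef]; linarith
    have hABP : A * B ≤ P := aux_ABP (norm_nonneg _) (norm_nonneg _) hk hP hBk hNpos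
    have hmain : N * (k - B ^ 2) ≤ k * (P - τ) ^ 2 := by
      rw [hNdef]; exact aux_main hk hτAB hABP
    have hQsq : Mval H x ^ 2 ≤ ((1 - ⟪x, a⟫) / (sq1 x * sq1 a)) ^ 2 := by
      rw [hMsq, div_pow, mul_pow, hsq1x, sq1_sq han.le, hxa]
      rw [div_le_div_iff₀ (by positivity) (by positivity)]
      have hrw : 1 - ‖a‖ ^ 2 = k - B ^ 2 := by rw [hB, hkdef]; ring
      rw [hrw]
      have : (1 - (c * m + τ)) = P - τ := by rw [hPdef]; ring
      rw [this]
      calc N * ((1 - ‖x‖ ^ 2) * (k - B ^ 2)) = (N * (k - B ^ 2)) * (1 - ‖x‖ ^ 2) := by ring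
        _ ≤ (k * (P - τ) ^ 2) * (1 - ‖x‖ ^ 2) := by
            apply mul_le_mul_of_nonneg_right hmain hX.le
        _ = (P - τ) ^ 2 * (k * (1 - ‖x‖ ^ 2)) := by ring
    have hQnn : 0 ≤ (1 - ⟪x, a⟫) / (sq1 x * sq1 a) :=
      le_trans zero_le_one (one_le_hQ hx han)
    calc Mval H x
        = Real.sqrt (Mval H x ^ 2) := (Real.sqrt_sq (Mval_nonneg H x)).symm
      _ ≤ Real.sqrt (((1 - ⟪x, a⟫) / (sq1 x * sq1 a)) ^ 2) := Real.sqrt_le_sqrt hQsq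
      _ = (1 - ⟪x, a⟫) / (sq1 x * sq1 a) := Real.sqrt_sq hQnn

-- derived
lemma hPointDist_carrier (H : HPlane d) (x : E d) (hx : ‖x‖ < 1) (hF : 0 ≤ Fv H x) :
    hPointDist x H.carrier = acosh (Mval H x) :=
  (isLeast_hPointDist H x hx hF).csInf_eq

lemma eq_of_sq_eq {a b : ℝ} (ha : 0 ≤ a) (hb : 0 ≤ b) (h : a ^ 2 = b ^ 2) : a = b := by
  have : a = Real.sqrt (a ^ 2) := (Real.sqrt_sq ha).symm
  rw [this, h, Real.sqrt_sq hb]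

/-- σ-level translation: distance to the hyperplane equals `t` iff
`Fv = (√k sinh t) · sq1`. -/
lemma hPointDist_eq_iff (H : HPlane d) (x : E d) (hx : ‖x‖ < 1) (hF : 0 ≤ Fv H x)
    {t : ℝ} (ht : 0 ≤ t) :
    hPointDist x H.carrier = t ↔
      Fv H x = (Real.sqrt (1 - H.c ^ 2) * Real.sinh t) * sq1 x := by
  have hk := kpos H
  have hsx := sq1_pos hx
  have hsinh : 0 ≤ Real.sinh t := by
    rw [← Real.sinh_zero]; exact Real.sinh_le_sinh.2 ht
  rw [hPointDist_carrier H x hx hF]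
  constructor
  · intro h
    have hM : Mval H x = Real.cosh t := by
      rw [← h, cosh_acosh (one_le_Mval H x)]
    have hMsq : Mval H x ^ 2 = 1 + Fv H x ^ 2 / ((1 - ‖x‖ ^ 2) * (1 - H.c ^ 2)) :=
      Mval_sq H x hx
    rw [hM, Real.cosh_sq] at hMsq
    have hXpos : (0:ℝ) < 1 - ‖x‖ ^ 2 := by nlinarith [sq1_sq hx.le, hsx]
    have hF2 : Fv H x ^ 2 = (1 - ‖x‖ ^ 2) * (1 - H.c ^ 2) * Real.sinh t ^ 2 := by
      have := hMsq
      field_simp at this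
      nlinarith [this]
    apply eq_of_sq_eq hF (by positivity)
    rw [hF2, mul_pow, mul_pow, Real.sq_sqrt hk.le, sq1_sq hx.le]
    ring
  · intro h
    have hM : Mval H x = Real.cosh t := by
      apply eq_of_sq_eq (Mval_nonneg H x) (Real.cosh_pos t).le
      rw [Mval_sq H x hx, Real.cosh_sq, h]
      have hXpos : (0:ℝ) < 1 - ‖x‖ ^ 2 := by nlinarith [sq1_sq hx.le, hsx]
      rw [mul_pow, mul_pow, Real.sq_sqrt hk.le, sq1_sq hx.le]
      field_simp
      ring
    rw [hM, acosh_cosh ht]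

/-- Concavity of `sq1` on the closed unit ball. -/
lemma sq1_concave {z₁ z₂ : E d} {a b : ℝ} (h1 : ‖z₁‖ ≤ 1) (h2 : ‖z₂‖ ≤ 1)
    (ha : 0 ≤ a) (hb : 0 ≤ b) (hab : a + b = 1) :
    a * sq1 z₁ + b * sq1 z₂ ≤ sq1 (a • z₁ + b • z₂) := by
  have hcs := key_CS h1 h2
  have hsum : 0 ≤ a * sq1 z₁ + b * sq1 z₂ := by
    have := sq1_nonneg z₁; have := sq1_nonneg z₂; positivity
  have hnorm : ‖a • z₁ + b • z₂‖ ^ 2 =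
      a ^ 2 * ‖z₁‖ ^ 2 + 2 * (a * b * ⟪z₁, z₂⟫) + b ^ 2 * ‖z₂‖ ^ 2 := by
    rw [norm_add_sq_real, real_inner_smul_left, real_inner_smul_right,
      norm_smul, norm_smul, Real.norm_eq_abs, Real.norm_eq_abs]
    simp only [mul_pow, sq_abs]
    ring
  have hkey : (a * sq1 z₁ + b * sq1 z₂) ^ 2 ≤ 1 - ‖a • z₁ + b • z₂‖ ^ 2 := by
    have e1 := sq1_sq h1
    have e2 := sq1_sq h2
    have hprod : sq1 z₁ * sq1 z₂ ≤ 1 - ⟪z₁, z₂⟫ := hcs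
    rw [hnorm]
    nlinarith [mul_nonneg ha hb, sq_nonneg (a + b)]
  calc a * sq1 z₁ + b * sq1 z₂ = Real.sqrt ((a * sq1 z₁ + b * sq1 z₂) ^ 2) :=
        (Real.sqrt_sq hsum).symm
    _ ≤ sq1 (a • z₁ + b • z₂) := Real.sqrt_le_sqrt hkey

/-- The convex "equidistant strip" region at level σ ≥ 0. -/
lemma strip_convex (H : HPlane d) {σ : ℝ} (hσ : 0 ≤ σ) :
    Convex ℝ {z : E d | ‖z‖ ≤ 1 ∧ Fv H z ≤ σ * sq1 z} := by
  rintro z₁ ⟨hz₁, hF₁⟩ z₂ ⟨hz₂, hF₂⟩ a b ha hb hab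
  constructor
  · calc ‖a • z₁ + b • z₂‖ ≤ ‖a • z₁‖ + ‖b • z₂‖ := norm_add_le _ _
      _ = a * ‖z₁‖ + b * ‖z₂‖ := by
          rw [norm_smul, norm_smul, Real.norm_eq_abs, Real.norm_eq_abs,
            abs_of_nonneg ha, abs_of_nonneg hb]
      _ ≤ a * 1 + b * 1 := by
          gcongr
      _ = 1 := by linarith
  · have hlin : Fv H (a • z₁ + b • z₂) = a * Fv H z₁ + b * Fv H z₂ := by
      unfold Fv
      rw [inner_add_right, real_inner_smul_right, real_inner_smul_right]
      linear_combination (-H.c) * hab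
    rw [hlin]
    calc a * Fv H z₁ + b * Fv H z₂ ≤ a * (σ * sq1 z₁) + b * (σ * sq1 z₂) := by
          gcongr
      _ = σ * (a * sq1 z₁ + b * sq1 z₂) := by ring
      _ ≤ σ * sq1 (a • z₁ + b • z₂) := by
          have := sq1_concave hz₁ hz₂ ha hb hab
          exact mul_le_mul_of_nonneg_left this hσ

-- new helpers
lemma acosh_pos {z : ℝ} (hz : 1 < z) : 0 < acosh z :=
  Real.log_pos (by nlinarith [Real.sqrt_nonneg (z ^ 2 - 1)])

lemma Mval_le_Mval (H : HPlane d) {x y : E d} (h0 : 0 ≤ Fv H x / sq1 x)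
    (h : Fv H x / sq1 x ≤ Fv H y / sq1 y) : Mval H x ≤ Mval H y := by
  apply Real.sqrt_le_sqrt
  have h2 : (Fv H x / sq1 x) ^ 2 ≤ (Fv H y / sq1 y) ^ 2 := pow_le_pow_left₀ h0 h 2
  have hk := kpos H
  gcongr

lemma grad_ineq (H : HPlane d) {xs z : E d} {σs : ℝ} (hxs : ‖xs‖ < 1) (hz : ‖z‖ ≤ 1)
    (hσ : 0 ≤ σs) (hFxs : Fv H xs = σs * sq1 xs) :
    (⟪σs • xs - sq1 xs • H.u, z - xs⟫ : ℝ) ≤ sq1 xs * (Fv H z - σs * sq1 z) := by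
  have hssq : sq1 xs ^ 2 = 1 - ‖xs‖ ^ 2 := sq1_sq hxs.le
  have hkey : sq1 xs * sq1 z ≤ 1 - ⟪xs, z⟫ := key_CS hxs.le hz
  have e : (⟪σs • xs - sq1 xs • H.u, z - xs⟫ : ℝ) =
      σs * ⟪xs, z⟫ - σs * ‖xs‖ ^ 2 - sq1 xs * ⟪H.u, z⟫ + sq1 xs * ⟪H.u, xs⟫ := by
    rw [inner_sub_left, inner_sub_right, inner_sub_right, real_inner_smul_left,
      real_inner_smul_left, real_inner_smul_left, real_inner_smul_left,
      real_inner_self_eq_norm_sq]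
    ring
  have hFz : Fv H z = H.c - ⟪H.u, z⟫ := rfl
  have hFxs' : H.c - ⟪H.u, xs⟫ = σs * sq1 xs := hFxs
  have p1 : sq1 xs * H.c - sq1 xs * ⟪H.u, xs⟫ = σs * sq1 xs ^ 2 := by
    linear_combination sq1 xs * hFxs'
  have p2 : σs * sq1 xs ^ 2 = σs - σs * ‖xs‖ ^ 2 := by
    linear_combination σs * hssq
  have p3 : σs * (sq1 xs * sq1 z) ≤ σs - σs * ⟪xs, z⟫ := by
    have h := mul_le_mul_of_nonneg_left hkey hσ
    rw [mul_sub, mul_one] at h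
    exact h
  have p4 : sq1 xs * (Fv H z - σs * sq1 z)
      = sq1 xs * H.c - sq1 xs * ⟪H.u, z⟫ - σs * (sq1 xs * sq1 z) := by
    rw [hFz]; ring
  have e' : (⟪σs • xs - sq1 xs • H.u, z - xs⟫ : ℝ)
      = σs * ⟪xs, z⟫ - σs * ‖xs‖ ^ 2 - sq1 xs * ⟪H.u, z⟫ + sq1 xs * ⟪H.u, xs⟫ := e
  linarith [e', p1, p2, p3, p4]

lemma grad_strict (H : HPlane d) {xs z : E d} {σs : ℝ} (hxs : ‖xs‖ < 1) (hz : ‖z‖ ≤ 1)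
    (hσ : 0 < σs) (hFxs : Fv H xs = σs * sq1 xs) (hzc : (⟪H.u, z⟫ : ℝ) = H.c) :
    (⟪σs • xs - sq1 xs • H.u, z⟫ : ℝ) < ⟪σs • xs - sq1 xs • H.u, xs⟫ := by
  have hssq : sq1 xs ^ 2 = 1 - ‖xs‖ ^ 2 := sq1_sq hxs.le
  have e1 : (⟪σs • xs - sq1 xs • H.u, z⟫ : ℝ) = σs * ⟪xs, z⟫ - sq1 xs * H.c := by
    rw [inner_sub_left, real_inner_smul_left, real_inner_smul_left, hzc]
  have e2 : (⟪σs • xs - sq1 xs • H.u, xs⟫ : ℝ) = σs * ‖xs‖ ^ 2 - sq1 xs * ⟪H.u, xs⟫ := by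
    rw [inner_sub_left, real_inner_smul_left, real_inner_smul_left,
      real_inner_self_eq_norm_sq]
  have hFxs' : H.c - ⟪H.u, xs⟫ = σs * sq1 xs := hFxs
  have hiz : (⟪xs, z⟫ : ℝ) < 1 := by
    have h1 : (⟪xs, z⟫ : ℝ) ≤ ‖xs‖ * ‖z‖ := real_inner_le_norm xs z
    nlinarith [norm_nonneg xs, norm_nonneg z]
  have p1 : sq1 xs * H.c - sq1 xs * ⟪H.u, xs⟫ = σs * sq1 xs ^ 2 := by
    linear_combination sq1 xs * hFxs'
  have p2 : σs * sq1 xs ^ 2 = σs - σs * ‖xs‖ ^ 2 := by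
    linear_combination σs * hssq
  have p3 : σs * ⟪xs, z⟫ < σs := by
    have h := mul_lt_mul_of_pos_left hiz hσ
    rwa [mul_one] at h
  linarith [e1, e2, p1, p2, p3]

end WidthProof

set_option maxHeartbeats 1600000 in
/-- `width_H(C)` equals the distance from `H` to the nearest equidistant
hypersurface `E` to `H` with `C ⊆ conv(H ∪ E)`. -/
theorem hwidth_eq_equiLevel {d : ℕ} (C : Set (E d)) (hC : IsBody C)
    (H : HPlane d) (hH : Supports H C) :
    hwidth C H = equiLevel C H := by
  obtain ⟨hcomp, hconv, hint, hsub⟩ := hC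
  have hball : ∀ x ∈ C, ‖x‖ < 1 := fun x hx => mem_ball_zero_iff.1 (hsub hx)
  have hFC : ∀ x ∈ C, 0 ≤ Fv H x := fun x hx => sub_nonneg.2 (hH.2 x hx)
  obtain ⟨y0, hy0⟩ := hint
  have hCne : C.Nonempty := ⟨y0, interior_subset hy0⟩
  -- the farthest point xs of C from H
  have hcont : ContinuousOn (fun z : E d => Fv H z / sq1 z) C := by
    apply ContinuousOn.div
    · exact (continuous_const.sub (Continuous.inner continuous_const continuous_id)).continuousOn
    · exact (Real.continuous_sqrt.comp (continuous_const.sub (continuous_norm.pow 2))).continuousOn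
    · intro z hz; exact (sq1_pos (hball z hz)).ne'
  obtain ⟨xs, hxsC, hxsmax'⟩ := hcomp.exists_isMaxOn hCne hcont
  have hxsmax : ∀ z ∈ C, Fv H z / sq1 z ≤ Fv H xs / sq1 xs := fun z hz => hxsmax' hz
  set σs : ℝ := Fv H xs / sq1 xs with hσdef
  have hxsb : ‖xs‖ < 1 := hball xs hxsC
  have hsxs : 0 < sq1 xs := sq1_pos hxsb
  have hFxs : Fv H xs = σs * sq1 xs := by
    rw [hσdef]; field_simp
  have hmax : ∀ z ∈ C, Fv H z ≤ σs * sq1 z := by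
    intro z hz
    have h := hxsmax z hz
    have hsz := sq1_pos (hball z hz)
    calc Fv H z = Fv H z / sq1 z * sq1 z := by field_simp
      _ ≤ σs * sq1 z := mul_le_mul_of_nonneg_right h hsz.le
  -- positivity of σs via an interior point
  have hσpos : 0 < σs := by
    obtain ⟨ε, hε, hball'⟩ := Metric.mem_nhds_iff.1 (mem_interior_iff_mem_nhds.1 hy0)
    set y' : E d := y0 - (ε / 2) • H.u with hy'
    have hy'C : y' ∈ C := by
      apply hball'
      rw [mem_ball, hy', dist_eq_norm]
      have : y0 - (ε / 2) • H.u - y0 = -((ε / 2) • H.u) := by abel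
      rw [this, norm_neg, norm_smul, H.norm_u, mul_one, Real.norm_eq_abs,
        abs_of_pos (by linarith)]
      linarith
    have hFy' : Fv H y' = Fv H y0 + ε / 2 := by
      rw [hy', Fv, Fv, inner_sub_right, real_inner_smul_right,
        real_inner_self_eq_norm_sq, H.norm_u]
      ring
    have hFy0 : 0 ≤ Fv H y0 := hFC y0 (interior_subset hy0)
    have hFy'pos : 0 < Fv H y' := by rw [hFy']; linarith
    have := hxsmax y' hy'C
    have hsy' := sq1_pos (hball y' hy'C)
    calc (0:ℝ) < Fv H y' / sq1 y' := div_pos hFy'pos hsy'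
      _ ≤ σs := this
  have hFxs0 : 0 ≤ Fv H xs := hFC xs hxsC
  -- w is the width value
  set w : ℝ := acosh (Mval H xs) with hwdef
  have hk := kpos H
  have hMxs_sq : Mval H xs ^ 2 = 1 + σs ^ 2 / (1 - H.c ^ 2) := by
    rw [Mval, Real.sq_sqrt]
    positivity
  have hMgt1 : 1 < Mval H xs := by
    have h1 : (1:ℝ) < 1 + σs ^ 2 / (1 - H.c ^ 2) := by
      have : 0 < σs ^ 2 / (1 - H.c ^ 2) := by positivity
      linarith
    have h2 : Real.sqrt 1 < Real.sqrt (1 + σs ^ 2 / (1 - H.c ^ 2)) := by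
      apply Real.sqrt_lt_sqrt (by norm_num) h1
    rwa [Real.sqrt_one] at h2
  have hw0 : 0 < w := acosh_pos hMgt1
  have hsinw : Real.sqrt (1 - H.c ^ 2) * Real.sinh w = σs := by
    rw [hwdef, sinh_acosh (one_le_Mval H xs), hMxs_sq]
    rw [show (1:ℝ) + σs ^ 2 / (1 - H.c ^ 2) - 1 = σs ^ 2 / (1 - H.c ^ 2) by ring]
    rw [← Real.sqrt_mul hk.le]
    rw [show (1 - H.c ^ 2) * (σs ^ 2 / (1 - H.c ^ 2)) = σs ^ 2 by field_simp]
    exact Real.sqrt_sq hσpos.le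
  have hMC : ∀ z ∈ C, Mval H z ≤ Mval H xs := by
    intro z hz
    exact Mval_le_Mval H (div_nonneg (hFC z hz) (sq1_nonneg z)) (hxsmax z hz)
  -- the supporting hyperplane K at xs
  set v : E d := σs • xs - sq1 xs • H.u with hv
  have hp0c : (⟪H.u, H.c • H.u⟫ : ℝ) = H.c := by
    rw [real_inner_smul_right, real_inner_self_eq_norm_sq, H.norm_u]; norm_num
  have hp0n : ‖H.c • H.u‖ < 1 := by
    rw [norm_smul, H.norm_u, mul_one, Real.norm_eq_abs]; exact H.abs_c
  have hvne : v ≠ 0 := by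
    intro h
    have := grad_strict H hxsb hp0n.le hσpos hFxs hp0c
    rw [← hv, h] at this
    simp at this
  have hvnorm : (0:ℝ) < ‖v‖ := norm_pos_iff.2 hvne
  have hnormKu : ‖‖v‖⁻¹ • v‖ = 1 := by
    rw [norm_smul, norm_inv, norm_norm, inv_mul_cancel₀ hvnorm.ne']
  set K : HPlane d := ⟨‖v‖⁻¹ • v, ⟪‖v‖⁻¹ • v, xs⟫, hnormKu, by
    have h1 := abs_real_inner_le_norm (‖v‖⁻¹ • v) xs
    rw [hnormKu, one_mul] at h1
    exact lt_of_le_of_lt h1 hxsb⟩ with hK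
  have hKu : K.u = ‖v‖⁻¹ • v := rfl
  have hKc : K.c = ⟪‖v‖⁻¹ • v, xs⟫ := rfl
  have hKiff : ∀ z : E d, (⟪K.u, z⟫ : ℝ) = K.c ↔ (⟪v, z⟫ : ℝ) = ⟪v, xs⟫ := by
    intro z
    rw [hKu, hKc, real_inner_smul_left, real_inner_smul_left]
    constructor
    · intro h; exact mul_left_cancel₀ (inv_ne_zero hvnorm.ne') h
    · intro h; rw [h]
  have hxsK : xs ∈ K.carrier := mem_carrier.2 ⟨hxsb, rfl⟩
  have hvle : ∀ z ∈ C, (⟪v, z⟫ : ℝ) ≤ ⟪v, xs⟫ := by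
    intro z hz
    have h1 := grad_ineq H hxsb (hball z hz).le hσpos.le hFxs
    rw [← hv] at h1
    have h2 : Fv H z - σs * sq1 z ≤ 0 := by linarith [hmax z hz]
    have h3 : (⟪v, z - xs⟫ : ℝ) ≤ 0 := by
      calc (⟪v, z - xs⟫ : ℝ) ≤ sq1 xs * (Fv H z - σs * sq1 z) := h1
        _ ≤ 0 := mul_nonpos_of_nonneg_of_nonpos hsxs.le h2
    rw [inner_sub_right] at h3
    linarith
  have hsupK : Supports K C := by
    constructor
    · exact ⟨xs, hxsK, hxsC⟩
    · intro z hz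
      rw [hKu, hKc, real_inner_smul_left, real_inner_smul_left]
      exact mul_le_mul_of_nonneg_left (hvle z hz) (inv_nonneg.2 hvnorm.le)
  -- ultraparallel
  have hclo : ∀ (L : HPlane d), closure L.carrier ⊆
      {z : E d | ‖z‖ ≤ 1 ∧ (⟪L.u, z⟫ : ℝ) = L.c} := by
    intro L
    apply closure_minimal
    · intro z hz
      exact ⟨(mem_carrier.1 hz).1.le, (mem_carrier.1 hz).2⟩
    · exact (isClosed_le continuous_norm continuous_const).inter
        (isClosed_eq (Continuous.inner continuous_const continuous_id) continuous_const)
  have hultra : Ultraparallel H K := by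
    rw [Ultraparallel, eq_empty_iff_forall_notMem]
    rintro z ⟨h1, h2⟩
    obtain ⟨hz1, hzc⟩ := hclo H h1
    obtain ⟨_, hzK⟩ := hclo K h2
    have hlt := grad_strict H hxsb hz1 hσpos hFxs hzc
    rw [← hv] at hlt
    have := (hKiff z).1 hzK
    linarith
  -- K's points are at distance ≥ w
  have hFK : ∀ b ∈ K.carrier, σs * sq1 b ≤ Fv H b := by
    intro b hb
    obtain ⟨hbb, hbc⟩ := mem_carrier.1 hb
    have h0 : (⟪v, b - xs⟫ : ℝ) = 0 := by
      rw [inner_sub_right, (hKiff b).1 hbc]; ring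
    have h1 := grad_ineq H hxsb hbb.le hσpos.le hFxs
    rw [← hv, h0] at h1
    nlinarith [hsxs]
  have hFKpos : ∀ b ∈ K.carrier, 0 ≤ Fv H b := by
    intro b hb
    have := hFK b hb
    have := mul_nonneg hσpos.le (sq1_nonneg b)
    linarith
  have hMK : ∀ b ∈ K.carrier, Mval H xs ≤ Mval H b := by
    intro b hb
    apply Mval_le_Mval H (by rw [← hσdef]; exact hσpos.le)
    rw [← hσdef]
    rw [le_div_iff₀ (sq1_pos (mem_carrier.1 hb).1)]
    exact hFK b hb
  -- the set distance between H and K equals w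
  have hsd : hSetDist H.carrier K.carrier = w := by
    apply IsLeast.csInf_eq
    constructor
    · obtain ⟨a0, ha0, hda0⟩ := (isLeast_hPointDist H xs hxsb hFxs0).1
      exact ⟨a0, ha0, xs, hxsK, by rw [hDist_symm]; exact hda0⟩
    · rintro r ⟨a, ha, b, hb, rfl⟩
      have hbb : ‖b‖ < 1 := (mem_carrier.1 hb).1
      have h1 : acosh (Mval H b) ≤ hDist b a :=
        (isLeast_hPointDist H b hbb (hFKpos b hb)).2 ⟨a, ha, rfl⟩
      have h2 : w ≤ acosh (Mval H b) := acosh_le_acosh (one_le_Mval H xs) (hMK b hb)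
      rw [hDist_symm]
      linarith
  -- hwidth C H = w
  have hwidtheq : hwidth C H = w := by
    apply IsGreatest.csSup_eq
    constructor
    · exact ⟨K, hultra, hsupK, hsd.symm⟩
    · rintro r ⟨K', hu', hs', rfl⟩
      obtain ⟨q, hqK', hqC⟩ := hs'.1
      have hqb : ‖q‖ < 1 := hball q hqC
      obtain ⟨a1, ha1, hda1⟩ := (isLeast_hPointDist H q hqb (hFC q hqC)).1
      have hmem : acosh (Mval H q) ∈
          {r | ∃ a ∈ H.carrier, ∃ b ∈ K'.carrier, hDist a b = r} :=
        ⟨a1, ha1, q, hqK', by rw [hDist_symm]; exact hda1⟩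
      have hbdd : BddBelow {r | ∃ a ∈ H.carrier, ∃ b ∈ K'.carrier, hDist a b = r} := by
        refine ⟨0, ?_⟩
        rintro r ⟨a, ha, b, hb, rfl⟩
        exact hDist_nonneg (mem_carrier.1 ha).1 (mem_carrier.1 hb).1
      have h2 : hSetDist H.carrier K'.carrier ≤ acosh (Mval H q) := csInf_le hbdd hmem
      have h3 : acosh (Mval H q) ≤ w := acosh_le_acosh (one_le_Mval H q) (hMC q hqC)
      exact le_trans h2 h3
  -- equiLevel C H = w
  have heq : equiLevel C H = w := by
    apply IsLeast.csInf_eq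
    constructor
    · refine ⟨hw0, ?_⟩
      intro x hxC
      have hxb := hball x hxC
      have hFx := hFC x hxC
      rcases eq_or_lt_of_le hFx with h0 | hpos
      · have hxH : x ∈ H.carrier := by
          apply mem_carrier.2
          refine ⟨hxb, ?_⟩
          have : H.c - ⟪H.u, x⟫ = 0 := by rw [← Fv]; linarith [h0]
          linarith
        exact subset_convexHull ℝ _ (Or.inl hxH)
      · -- ray construction
        set p0 : E d := H.c • H.u with hp0
        set δ : ℝ := Fv H x with hδ
        set zf : ℝ → E d := fun s => p0 + s • (x - p0) with hzf
        have hFzf : ∀ s, Fv H (zf s) = s * δ := by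
          intro s
          show H.c - ⟪H.u, p0 + s • (x - p0)⟫ = s * δ
          rw [inner_add_right, hp0c, real_inner_smul_right, inner_sub_right, hp0c]
          show H.c - (H.c + s * (⟪H.u, x⟫ - H.c)) = s * (H.c - ⟪H.u, x⟫)
          ring
        set ψ : ℝ → ℝ := fun s => s * δ - σs * sq1 (zf s) with hψ
        have hψcont : Continuous ψ := by
          apply Continuous.sub
          · exact continuous_id.mul continuous_const
          · apply Continuous.mul continuous_const
            apply Real.continuous_sqrt.comp
            apply Continuous.sub continuous_const
            apply Continuous.pow
            apply Continuous.norm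
            exact continuous_const.add (continuous_id.smul continuous_const)
        have hz1 : zf 1 = x := by
          show p0 + (1:ℝ) • (x - p0) = x
          rw [one_smul]; abel
        have hψ1 : ψ 1 ≤ 0 := by
          show 1 * δ - σs * sq1 (zf 1) ≤ 0
          rw [hz1, one_mul]
          linarith [hmax x hxC]
        set S : ℝ := max 1 (σs / δ) with hS
        have hS1 : (1:ℝ) ≤ S := le_max_left _ _
        have hψS : 0 ≤ ψ S := by
          have h1 : σs / δ ≤ S := le_max_right _ _
          have h2 : σs ≤ S * δ := by
            rw [div_le_iff₀ hpos] at h1; linarith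
          have h3 : sq1 (zf S) ≤ 1 := sq1_le_one _
          show 0 ≤ S * δ - σs * sq1 (zf S)
          have h4 : σs * sq1 (zf S) ≤ σs * 1 := mul_le_mul_of_nonneg_left h3 hσpos.le
          linarith
        have hivt := intermediate_value_Icc hS1 hψcont.continuousOn
        obtain ⟨s', hs'mem, hs'0⟩ := hivt ⟨hψ1, hψS⟩
        obtain ⟨hs'1, _⟩ := hs'mem
        have hs'pos : 0 < s' := lt_of_lt_of_le one_pos hs'1
        have hδs : s' * δ = σs * sq1 (zf s') := by
          have : s' * δ - σs * sq1 (zf s') = 0 := hs'0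
          linarith
        have hsq1e : 0 < sq1 (zf s') := by
          have h1 : 0 < σs * sq1 (zf s') := hδs ▸ mul_pos hs'pos hpos
          nlinarith [sq1_nonneg (zf s'), hσpos]
        have heb : ‖zf s'‖ < 1 := by
          have h1 : 0 < 1 - ‖zf s'‖ ^ 2 := Real.sqrt_pos.1 hsq1e
          exact aux_lt_one_of_sq (norm_nonneg _) (by linarith)
        have hFe : Fv H (zf s') = σs * sq1 (zf s') := by rw [hFzf]; exact hδs
        have hFepos : 0 < Fv H (zf s') := by
          rw [hFzf]; exact mul_pos hs'pos hpos
        have heE : zf s' ∈ equiSurf H w := by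
          refine ⟨mem_ball_zero_iff.2 heb, ?_, ?_⟩
          · have : 0 < H.c - ⟪H.u, zf s'⟫ := hFepos
            linarith
          · rw [hPointDist_eq_iff H (zf s') heb hFepos.le hw0.le, hsinw]
            exact hFe
        have hp0H : p0 ∈ H.carrier := mem_carrier.2 ⟨hp0n, hp0c⟩
        have h5 : s'⁻¹ ≤ 1 := by
          rw [← one_div, div_le_one hs'pos]; exact hs'1
        have hxp : x - p0 = s'⁻¹ • (zf s' - p0) := by
          have h6 : zf s' - p0 = s' • (x - p0) := by
            show p0 + s' • (x - p0) - p0 = s' • (x - p0)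
            abel
          rw [h6, smul_smul, inv_mul_cancel₀ hs'pos.ne', one_smul]
        have hcomb : (1 - s'⁻¹) • p0 + s'⁻¹ • zf s' = x := by
          have h7 : s'⁻¹ • zf s' - s'⁻¹ • p0 = x - p0 := by
            rw [← smul_sub, ← hxp]
          rw [sub_smul, one_smul]
          calc p0 - s'⁻¹ • p0 + s'⁻¹ • zf s'
              = p0 + (s'⁻¹ • zf s' - s'⁻¹ • p0) := by abel
            _ = p0 + (x - p0) := by rw [h7]
            _ = x := by abel
        have hxseg : x ∈ segment ℝ p0 (zf s') :=
          ⟨1 - s'⁻¹, s'⁻¹, by linarith, by positivity, by ring, hcomb⟩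
        have hm1 : p0 ∈ H.carrier ∪ equiSurf H w := Set.mem_union_left _ hp0H
        have hm2 : zf s' ∈ H.carrier ∪ equiSurf H w := Set.mem_union_right _ heE
        exact segment_subset_convexHull hm1 hm2 hxseg
    · rintro t ⟨ht, hsubC⟩
      set σt : ℝ := Real.sqrt (1 - H.c ^ 2) * Real.sinh t with hσt
      have hsinht : 0 ≤ Real.sinh t := by
        rw [← Real.sinh_zero]; exact Real.sinh_le_sinh.2 ht.le
      have hσt0 : 0 ≤ σt := mul_nonneg (Real.sqrt_nonneg _) hsinht
      have hsub2 : convexHull ℝ (H.carrier ∪ equiSurf H t) ⊆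
          {z : E d | ‖z‖ ≤ 1 ∧ Fv H z ≤ σt * sq1 z} := by
        apply convexHull_min _ (strip_convex H hσt0)
        apply union_subset
        · intro z hz
          obtain ⟨hzb, hzc⟩ := mem_carrier.1 hz
          refine ⟨hzb.le, ?_⟩
          have : Fv H z = 0 := by rw [Fv, hzc]; ring
          rw [this]
          exact mul_nonneg hσt0 (sq1_nonneg z)
        · rintro z ⟨hzb, hzlt, hzd⟩
          have hzb' : ‖z‖ < 1 := mem_ball_zero_iff.1 hzb
          have hFz : 0 ≤ Fv H z := by
            have : 0 < H.c - ⟪H.u, z⟫ := sub_pos.2 hzlt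
            exact this.le
          refine ⟨hzb'.le, ?_⟩
          have := (hPointDist_eq_iff H z hzb' hFz ht.le).1 hzd
          rw [this]
      have hxs_in := hsub2 (hsubC hxsC)
      have hFle : Fv H xs ≤ σt * sq1 xs := hxs_in.2
      have hσles : σs ≤ σt := by
        rw [hFxs] at hFle
        exact le_of_mul_le_mul_right hFle hsxs
      have hsinh_le : Real.sinh w ≤ Real.sinh t := by
        rw [← hsinw] at hσles
        have hsk : 0 < Real.sqrt (1 - H.c ^ 2) := Real.sqrt_pos.2 hk
        exact le_of_mul_le_mul_left hσles hsk
      exact Real.sinh_le_sinh.1 hsinh_le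
  rw [hwidtheq, heq]


end Hyp
end
end

section
/- Let C ⊂ H^d be a complete body of diameter δ, let a, b ∈ C, and let c ∈ H^d satisfy d(a,c) = d(b,c) = δ. Then the circular arc P_c(a,b) is contained in C. -/
/- We formalize hyperbolic space `H^d` via the Beltrami–Klein model: the open
unit ball of `ℝ^d`, where hyperbolic geodesic segments are exactly Euclidean
segments (so hyperbolic convexity = Euclidean convexity), hyperplanes are
chords of affine hyperplanes, and the hyperbolic distance is given by the
Cayley–Klein formula `cosh d(x,y) = (1 - ⟪x,y⟫)/√((1-‖x‖²)(1-‖y‖²))`. -/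

noncomputable section
open Metric Set RealInnerProductSpace

namespace Hyp

section AuxLemmas
variable {d : ℕ}

variable {d : ℕ}

/-- The Cayley–Klein pairing whose `acosh` is the hyperbolic distance. -/
def Qm (x y : E d) : ℝ :=
  (1 - (inner ℝ x y : ℝ)) / (Real.sqrt (1 - ‖x‖ ^ 2) * Real.sqrt (1 - ‖y‖ ^ 2))

lemma hDist_eq_acosh_Qm (x y : E d) : hDist x y = acosh (Qm x y) := rfl

lemma one_sub_sq_pos {x : E d} (hx : ‖x‖ < 1) : 0 < 1 - ‖x‖ ^ 2 := by
  nlinarith [norm_nonneg x]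

lemma sqrt_pos' {x : E d} (hx : ‖x‖ < 1) : 0 < Real.sqrt (1 - ‖x‖ ^ 2) :=
  Real.sqrt_pos.2 (one_sub_sq_pos hx)

lemma Qm_comm (x y : E d) : Qm x y = Qm y x := by
  unfold Qm; rw [real_inner_comm, mul_comm]

lemma Qm_self {x : E d} (hx : ‖x‖ < 1) : Qm x x = 1 := by
  unfold Qm
  rw [real_inner_self_eq_norm_sq, Real.mul_self_sqrt (one_sub_sq_pos hx).le,
    div_self (one_sub_sq_pos hx).ne']

lemma one_le_Qm {x y : E d} (hx : ‖x‖ < 1) (hy : ‖y‖ < 1) : 1 ≤ Qm x y := by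
  have hx2 := one_sub_sq_pos hx
  have hy2 := one_sub_sq_pos hy
  have hsx := sqrt_pos' hx
  have hsy := sqrt_pos' hy
  have hinner := real_inner_le_norm x y
  rw [Qm, le_div_iff₀ (by positivity), one_mul]
  have key : Real.sqrt (1 - ‖x‖ ^ 2) * Real.sqrt (1 - ‖y‖ ^ 2)
      = Real.sqrt ((1 - ‖x‖ ^ 2) * (1 - ‖y‖ ^ 2)) := (Real.sqrt_mul hx2.le _).symm
  rw [key]
  have hxy1 : ‖x‖ * ‖y‖ < 1 := by nlinarith [norm_nonneg x, norm_nonneg y]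
  have hsq : (1 - ‖x‖ ^ 2) * (1 - ‖y‖ ^ 2) ≤ (1 - (inner ℝ x y : ℝ)) ^ 2 := by
    nlinarith [sq_nonneg (‖x‖ - ‖y‖),
      mul_nonneg (sub_nonneg.2 hinner) (by linarith : (0:ℝ) ≤ 2 - ‖x‖ * ‖y‖ - (inner ℝ x y : ℝ))]
  calc Real.sqrt ((1 - ‖x‖ ^ 2) * (1 - ‖y‖ ^ 2))
      ≤ Real.sqrt ((1 - (inner ℝ x y : ℝ)) ^ 2) := Real.sqrt_le_sqrt hsq
    _ = 1 - (inner ℝ x y : ℝ) := Real.sqrt_sq (by linarith)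

lemma eq_of_Qm_eq_one {x y : E d} (hx : ‖x‖ < 1) (hy : ‖y‖ < 1) (hQ : Qm x y = 1) :
    x = y := by
  have hx2 := one_sub_sq_pos hx
  have hy2 := one_sub_sq_pos hy
  have hsx := sqrt_pos' hx
  have hsy := sqrt_pos' hy
  have hinner := real_inner_le_norm x y
  have hxy1 : ‖x‖ * ‖y‖ < 1 := by nlinarith [norm_nonneg x, norm_nonneg y]
  have hnum : 1 - (inner ℝ x y : ℝ) =
      Real.sqrt (1 - ‖x‖ ^ 2) * Real.sqrt (1 - ‖y‖ ^ 2) := by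
    rw [Qm, div_eq_one_iff_eq (by positivity)] at hQ
    exact hQ
  have hsq : (1 - (inner ℝ x y : ℝ)) ^ 2 = (1 - ‖x‖ ^ 2) * (1 - ‖y‖ ^ 2) := by
    rw [hnum]
    rw [mul_pow, Real.sq_sqrt hx2.le, Real.sq_sqrt hy2.le]
  have h2 : (0:ℝ) < 2 - ‖x‖ * ‖y‖ - (inner ℝ x y : ℝ) := by linarith
  have e2 : (inner ℝ x y : ℝ) = ‖x‖ * ‖y‖ := by
    nlinarith [sq_nonneg (‖x‖ - ‖y‖),
      mul_nonneg (sub_nonneg.2 hinner) h2.le]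
  have e1 : ‖x‖ = ‖y‖ := by
    nlinarith [sq_nonneg (‖x‖ - ‖y‖), norm_nonneg x, norm_nonneg y]
  have h3 : ‖y‖ • x = ‖x‖ • y := (inner_eq_norm_mul_iff_real).1 e2
  rcases eq_or_ne ‖y‖ 0 with h0 | h0
  · have : x = 0 := norm_eq_zero.1 (by rw [e1, h0])
    have : y = 0 := norm_eq_zero.1 h0
    simp_all
  · rw [e1] at h3
    exact smul_right_injective _ h0 h3

lemma acosh_lt_acosh {z w : ℝ} (hz : 1 ≤ z) (hzw : z < w) : acosh z < acosh w := by
  unfold acosh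
  have h1 : (0:ℝ) < z + Real.sqrt (z ^ 2 - 1) := by
    have := Real.sqrt_nonneg (z ^ 2 - 1); linarith
  apply Real.log_lt_log h1
  have : Real.sqrt (z ^ 2 - 1) ≤ Real.sqrt (w ^ 2 - 1) :=
    Real.sqrt_le_sqrt (by nlinarith)
  linarith

lemma acosh_le_acosh_s10 {z w : ℝ} (hz : 1 ≤ z) (hzw : z ≤ w) : acosh z ≤ acosh w := by
  rcases eq_or_lt_of_le hzw with rfl | h
  · exact le_refl _
  · exact (acosh_lt_acosh hz h).le

lemma acosh_le_acosh_iff {z w : ℝ} (hz : 1 ≤ z) (hw : 1 ≤ w) :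
    acosh z ≤ acosh w ↔ z ≤ w := by
  constructor
  · intro h
    by_contra hc
    push_neg at hc
    exact absurd h (not_le.2 (acosh_lt_acosh hw hc))
  · exact acosh_le_acosh_s10 hz

lemma acosh_inj {z w : ℝ} (hz : 1 ≤ z) (hw : 1 ≤ w) (h : acosh z = acosh w) : z = w :=
  le_antisymm ((acosh_le_acosh_iff hz hw).1 h.le) ((acosh_le_acosh_iff hw hz).1 h.ge)

lemma acosh_one : acosh 1 = 0 := by
  simp [acosh]

/-- Lifting a convex combination to a positive combination of hyperboloid lifts,
expressed purely through the pairing `Qm`. -/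
lemma segment_decomp {a b p : E d} (ha : ‖a‖ < 1) (hb : ‖b‖ < 1) (hp : ‖p‖ < 1)
    (hseg : p ∈ segment ℝ a b) :
    ∃ α β : ℝ, 0 ≤ α ∧ 0 ≤ β ∧ (β = 0 → p = a) ∧
      ∀ w : E d, ‖w‖ < 1 → Qm w p = α * Qm w a + β * Qm w b := by
  obtain ⟨u, v, hu, hv, huv, hpe⟩ := hseg
  have hv' : v = 1 - u := by linarith
  subst hv'
  have hsa := sqrt_pos' ha
  have hsb := sqrt_pos' hb
  have hsp := sqrt_pos' hp
  refine ⟨u * Real.sqrt (1 - ‖a‖ ^ 2) / Real.sqrt (1 - ‖p‖ ^ 2),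
    (1 - u) * Real.sqrt (1 - ‖b‖ ^ 2) / Real.sqrt (1 - ‖p‖ ^ 2), ?_, ?_, ?_, ?_⟩
  · positivity
  · have : 0 ≤ 1 - u := hv
    positivity
  · intro hβ
    have h0 : (1 - u) * Real.sqrt (1 - ‖b‖ ^ 2) = 0 := by
      field_simp at hβ; rw [mul_zero] at hβ; exact hβ
    have hu1 : u = 1 := by
      rcases mul_eq_zero.1 h0 with h | h
      · linarith
      · exact absurd h hsb.ne'
    rw [← hpe, hu1]; simp
  · intro w hw
    have hsw := sqrt_pos' hw
    have hip : (inner ℝ w p : ℝ) = u * (inner ℝ w a : ℝ) + (1 - u) * (inner ℝ w b : ℝ) := by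
      rw [← hpe, inner_add_right, real_inner_smul_right, real_inner_smul_right]
    unfold Qm
    rw [hip]
    field_simp [hsa.ne', hsb.ne', hsp.ne', hsw.ne']
    ring


lemma norm_lt_one_of_mem_ball01 {x : E d} (h : x ∈ ball01 d) : ‖x‖ < 1 := by
  simpa [ball01, mem_ball_zero_iff] using h

lemma diam_bddAbove {C : Set (E d)} (hcpt : IsCompact C) (hne : C.Nonempty)
    (hsub : C ⊆ ball01 d) :
    BddAbove {r | ∃ a ∈ C, ∃ b ∈ C, hDist a b = r} := by
  obtain ⟨x0, hx0, hmax'⟩ := hcpt.exists_isMaxOn hne continuous_norm.continuousOn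
  have hmax : ∀ y ∈ C, ‖y‖ ≤ ‖x0‖ := fun y hy => hmax' hy
  have hR : ‖x0‖ < 1 := norm_lt_one_of_mem_ball01 (hsub hx0)
  set R := ‖x0‖ with hRdef
  have hR0 : 0 ≤ R := norm_nonneg _
  have hR2 : 0 < 1 - R ^ 2 := by nlinarith
  refine ⟨acosh ((1 + R ^ 2) / (1 - R ^ 2)), ?_⟩
  rintro r ⟨x, hx, y, hy, rfl⟩
  have hxn : ‖x‖ < 1 := norm_lt_one_of_mem_ball01 (hsub hx)
  have hyn : ‖y‖ < 1 := norm_lt_one_of_mem_ball01 (hsub hy)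
  rw [hDist_eq_acosh_Qm]
  apply acosh_le_acosh_s10 (one_le_Qm hxn hyn)
  have hxR : ‖x‖ ≤ R := hmax x hx
  have hyR : ‖y‖ ≤ R := hmax y hy
  have h1 : 1 - (inner ℝ x y : ℝ) ≤ 1 + R ^ 2 := by
    have h2 : ‖x‖ * ‖y‖ ≤ R * R := mul_le_mul hxR hyR (norm_nonneg _) hR0
    have h3 := abs_real_inner_le_norm x y
    have h4 := neg_abs_le (inner ℝ x y : ℝ)
    nlinarith
  have hd : 1 - R ^ 2 ≤ Real.sqrt (1 - ‖x‖ ^ 2) * Real.sqrt (1 - ‖y‖ ^ 2) := by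
    have e1 : Real.sqrt (1 - R ^ 2) ≤ Real.sqrt (1 - ‖x‖ ^ 2) :=
      Real.sqrt_le_sqrt (by nlinarith [norm_nonneg x, mul_le_mul hxR hxR (norm_nonneg x) hR0])
    have e2 : Real.sqrt (1 - R ^ 2) ≤ Real.sqrt (1 - ‖y‖ ^ 2) :=
      Real.sqrt_le_sqrt (by nlinarith [norm_nonneg y, mul_le_mul hyR hyR (norm_nonneg y) hR0])
    calc 1 - R ^ 2 = Real.sqrt (1 - R ^ 2) * Real.sqrt (1 - R ^ 2) :=
          (Real.mul_self_sqrt hR2.le).symm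
      _ ≤ _ := mul_le_mul e1 e2 (Real.sqrt_nonneg _) (Real.sqrt_nonneg _)
  exact div_le_div₀ (by positivity) h1 hR2 hd

end AuxLemmas

/-- If `a, b` belong to a complete body `C` of diameter `δ` and `c` is at
distance `δ` from both, then the arc `P_c(a,b)` is contained in `C`. -/
theorem arcP_subset_complete {d : ℕ} (C : Set (E d)) (hC : IsBody C)
    (δ : ℝ) (hcomp : IsComplete C δ) (a b : E d) (ha : a ∈ C) (hb : b ∈ C)
    (c : E d) (hc : c ∈ ball01 d) (hac : hDist a c = δ) (hbc : hDist b c = δ) :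
    arcP c a b δ ⊆ C := by
  intro g hg
  obtain ⟨hgball, hcg, p, hpcg, hpab⟩ := hg
  by_contra hgC
  obtain ⟨hcpt, hconv, hint, hsub⟩ := hC
  have na : ‖a‖ < 1 := norm_lt_one_of_mem_ball01 (hsub ha)
  have nb : ‖b‖ < 1 := norm_lt_one_of_mem_ball01 (hsub hb)
  have nc : ‖c‖ < 1 := norm_lt_one_of_mem_ball01 hc
  have ng : ‖g‖ < 1 := norm_lt_one_of_mem_ball01 hgball
  have hbdd := diam_bddAbove hcpt ⟨a, ha⟩ hsub
  have hle : ∀ x ∈ C, ∀ y ∈ C, hDist x y ≤ δ := by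
    intro x hx y hy
    rw [← hcomp.1]
    exact le_csSup hbdd ⟨x, hx, y, hy, rfl⟩
  have hδ0 : 0 ≤ δ := by
    have hzero : hDist a a = 0 := by rw [hDist_eq_acosh_Qm, Qm_self na, acosh_one]
    linarith [hle a ha a ha]
  have hbig := hcomp.2 g hgball hgC
  have hex : ∃ x ∈ C, δ < hDist x g := by
    by_contra hno
    push_neg at hno
    have hub : ∀ r ∈ {r | ∃ x ∈ insert g C, ∃ y ∈ insert g C, hDist x y = r}, r ≤ δ := by
      rintro r ⟨x, hx, y, hy, rfl⟩
      have hgg : hDist g g = 0 := by rw [hDist_eq_acosh_Qm, Qm_self ng, acosh_one]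
      rcases hx with rfl | hx <;> rcases hy with rfl | hy
      · rw [hgg]; exact hδ0
      · rw [hDist_eq_acosh_Qm, Qm_comm, ← hDist_eq_acosh_Qm]
        exact hno y hy
      · exact hno x hx
      · exact hle x hx y hy
    have hcontra : hDiam (insert g C) ≤ δ := Real.sSup_le hub hδ0
    exact absurd hbig (not_lt.2 hcontra)
  obtain ⟨x, hxC, hxg⟩ := hex
  have nx : ‖x‖ < 1 := norm_lt_one_of_mem_ball01 (hsub hxC)
  set h0 := Qm a c with hh0
  have h0ge : 1 ≤ h0 := one_le_Qm na nc
  have hδ : δ = acosh h0 := by rw [← hac, hDist_eq_acosh_Qm]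
  have hQbc : Qm b c = h0 :=
    acosh_inj (one_le_Qm nb nc) h0ge (by rw [← hDist_eq_acosh_Qm, hbc]; exact hδ)
  have hQcg : Qm c g = h0 :=
    acosh_inj (one_le_Qm nc ng) h0ge (by rw [← hDist_eq_acosh_Qm, hcg]; exact hδ)
  have hQxa : Qm x a ≤ h0 :=
    (acosh_le_acosh_iff (one_le_Qm nx na) h0ge).1
      (by rw [← hDist_eq_acosh_Qm, ← hδ]; exact hle x hxC a ha)
  have hQxb : Qm x b ≤ h0 :=
    (acosh_le_acosh_iff (one_le_Qm nx nb) h0ge).1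
      (by rw [← hDist_eq_acosh_Qm, ← hδ]; exact hle x hxC b hb)
  have hQxg : h0 < Qm x g := by
    by_contra hcon
    push_neg at hcon
    have hmono := acosh_le_acosh_s10 (one_le_Qm nx ng) hcon
    rw [← hDist_eq_acosh_Qm, ← hδ] at hmono
    exact absurd hxg (not_lt.2 hmono)
  have hpball : p ∈ ball01 d :=
    (convex_ball (0 : E d) 1).segment_subset (hsub ha) (hsub hb) hpab
  have np : ‖p‖ < 1 := norm_lt_one_of_mem_ball01 hpball
  obtain ⟨α, β, hα, hβ, -, hdec1⟩ := segment_decomp na nb np hpab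
  obtain ⟨γ, τ, hγ, hτ, hτ0, hdec2⟩ := segment_decomp nc ng np hpcg
  have E1 : Qm c p = (α + β) * h0 := by
    rw [hdec1 c nc, Qm_comm c a, Qm_comm c b, hQbc, ← hh0]
    ring
  have E2 : Qm c p = γ + τ * h0 := by
    rw [hdec2 c nc, Qm_self nc, hQcg]; ring
  have E3 : Qm x p ≤ (α + β) * h0 := by
    rw [hdec1 x nx]
    nlinarith [mul_le_mul_of_nonneg_left hQxa hα, mul_le_mul_of_nonneg_left hQxb hβ]
  have E4 : Qm x p = γ * Qm x c + τ * Qm x g := hdec2 x nx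
  have hxc1 : 1 ≤ Qm x c := one_le_Qm nx nc
  rcases eq_or_lt_of_le hτ with hτz | hτpos
  · have hpc : p = c := hτ0 hτz.symm
    subst hpc
    have hab1 : (α + β) * h0 = 1 := by rw [← E1, Qm_self nc]
    rw [hab1] at E3
    have hxceq : Qm x p = 1 := le_antisymm E3 hxc1
    have hxeq : x = p := eq_of_Qm_eq_one nx nc hxceq
    rw [hxeq, hQcg] at hQxg
    exact lt_irrefl _ hQxg
  · have key : γ * Qm x c + τ * Qm x g ≤ γ + τ * h0 := by
      calc γ * Qm x c + τ * Qm x g = Qm x p := E4.symm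
        _ ≤ (α + β) * h0 := E3
        _ = γ + τ * h0 := by rw [← E1, E2]
    have h5 : τ * Qm x g ≤ τ * h0 := by nlinarith [mul_le_mul_of_nonneg_left hxc1 hγ]
    have h6 : Qm x g ≤ h0 := le_of_mul_le_mul_left h5 hτpos
    exact absurd hQxg (not_lt.2 h6)

end Hyp
end
end
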